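/- Let a > 0 and 0 < m < M < ∞. Then the constitutive map S is monotone on its domain: for all D₁, D₂ ∈ Sym3 with |D₁| < M and |D₂| < M, one has (S(D₁) − S(D₂)) · (D₁ − D₂) ≥ 0. -/

import Mathlib

noncomputable section

/-- Frobenius inner product on 3×3 real matrices: `A·B = Σ_{i,j} A_{ij} B_{ij}`. -/
def mdot (A B : Matrix (Fin 3) (Fin 3) ℝ) : ℝ := ∑ i, ∑ j, A i j * B i j

/-- Frobenius norm `|A| = (A·A)^{1/2}`. -/
def mnorm (A : Matrix (Fin 3) (Fin 3) ℝ) : ℝ := Real.sqrt (mdot A A)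

/-- The constitutive map `S(D) = (|D|−m)_+ (M^a − |D|^a)^{−1/a} D/|D|`, with `S(0) = 0`. -/
def Smap (a m M : ℝ) (D : Matrix (Fin 3) (Fin 3) ℝ) : Matrix (Fin 3) (Fin 3) ℝ :=
  ((max (mnorm D - m) 0) * (M ^ a - mnorm D ^ a) ^ (-1/a) / mnorm D) • D

lemma mdot_comm (A B : Matrix (Fin 3) (Fin 3) ℝ) : mdot A B = mdot B A := by
  simp [mdot, mul_comm]

lemma mdot_sub_left (A B C : Matrix (Fin 3) (Fin 3) ℝ) :
    mdot (A - B) C = mdot A C - mdot B C := by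
  simp [mdot, sub_mul, Finset.sum_sub_distrib]

lemma mdot_smul_left (c : ℝ) (A B : Matrix (Fin 3) (Fin 3) ℝ) :
    mdot (c • A) B = c * mdot A B := by
  simp [mdot, Finset.mul_sum, mul_assoc]

lemma mdot_self_nonneg (A : Matrix (Fin 3) (Fin 3) ℝ) : 0 ≤ mdot A A := by
  apply Finset.sum_nonneg
  intro i _
  exact Finset.sum_nonneg fun j _ => mul_self_nonneg _

lemma mnorm_nonneg (A : Matrix (Fin 3) (Fin 3) ℝ) : 0 ≤ mnorm A := Real.sqrt_nonneg _

lemma mnorm_sq (A : Matrix (Fin 3) (Fin 3) ℝ) : mnorm A ^ 2 = mdot A A :=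
  Real.sq_sqrt (mdot_self_nonneg A)

lemma mdot_flat (A B : Matrix (Fin 3) (Fin 3) ℝ) :
    mdot A B = ∑ p : (Fin 3) × (Fin 3), A p.1 p.2 * B p.1 p.2 := by
  rw [mdot, Fintype.sum_prod_type]

/-- Cauchy–Schwarz for the Frobenius inner product. -/
lemma abs_mdot_le (A B : Matrix (Fin 3) (Fin 3) ℝ) :
    |mdot A B| ≤ mnorm A * mnorm B := by
  have h := Finset.sum_mul_sq_le_sq_mul_sq Finset.univ
    (fun p : (Fin 3) × (Fin 3) => A p.1 p.2) (fun p => B p.1 p.2)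
  have h2 : (mdot A B) ^ 2 ≤ mdot A A * mdot B B := by
    rw [mdot_flat A B, mdot_flat A A, mdot_flat B B]
    simpa [sq] using h
  calc |mdot A B| ≤ Real.sqrt (mdot A A * mdot B B) := by
        rw [← Real.sqrt_sq_eq_abs]; exact Real.sqrt_le_sqrt h2
    _ = mnorm A * mnorm B := Real.sqrt_mul (mdot_self_nonneg A) _

lemma mdot_le (A B : Matrix (Fin 3) (Fin 3) ℝ) : mdot A B ≤ mnorm A * mnorm B :=
  (le_abs_self _).trans (abs_mdot_le A B)

/-- The scalar response function. -/
def phi (a m M t : ℝ) : ℝ := max (t - m) 0 * (M ^ a - t ^ a) ^ (-1/a)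

lemma phi_nonneg (a m M t : ℝ) (ht : 0 ≤ t) (htM : t < M) (ha : 0 < a) :
    0 ≤ phi a m M t := by
  apply mul_nonneg (le_max_right _ _)
  apply Real.rpow_nonneg
  have : t ^ a < M ^ a := Real.rpow_lt_rpow ht htM ha
  linarith

lemma phi_mono (a m M : ℝ) (ha : 0 < a) {s t : ℝ} (hs : 0 ≤ s) (hst : s ≤ t)
    (htM : t < M) : phi a m M s ≤ phi a m M t := by
  have ht : 0 ≤ t := hs.trans hst
  have hMt : t ^ a < M ^ a := Real.rpow_lt_rpow ht htM ha
  have hst' : s ^ a ≤ t ^ a := Real.rpow_le_rpow hs hst ha.le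
  have hpos : 0 < M ^ a - t ^ a := by linarith
  apply mul_le_mul
  · exact max_le_max (by linarith) le_rfl
  · exact Real.rpow_le_rpow_of_nonpos hpos (by linarith)
      (by rw [neg_div]; exact neg_nonpos.mpr (by positivity))
  · exact Real.rpow_nonneg (by linarith) _
  · exact le_max_right _ _

lemma phi_zero (a m M : ℝ) (hm : 0 < m) : phi a m M 0 = 0 := by
  unfold phi
  rw [max_eq_right (by linarith : (0:ℝ) - m ≤ 0), zero_mul]

/-- Monotonicity of the constitutive map `S` on `{D ∈ Sym3 : |D| < M}`. -/
theorem Smap_monotone (a m M : ℝ) (ha : 0 < a) (hm : 0 < m) (hmM : m < M)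
    (D₁ D₂ : Matrix (Fin 3) (Fin 3) ℝ) (hs₁ : D₁.IsSymm) (hs₂ : D₂.IsSymm)
    (h₁ : mnorm D₁ < M) (h₂ : mnorm D₂ < M) :
    0 ≤ mdot (Smap a m M D₁ - Smap a m M D₂) (D₁ - D₂) := by
  set r := mnorm D₁ with hr
  set s := mnorm D₂ with hsdef
  set c := mdot D₁ D₂ with hc
  have hr0 : 0 ≤ r := mnorm_nonneg _
  have hs0 : 0 ≤ s := mnorm_nonneg _
  set fr := phi a m M r with hfr
  set fs := phi a m M s with hfs
  have hfr0 : 0 ≤ fr := phi_nonneg a m M r hr0 h₁ ha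
  have hfs0 : 0 ≤ fs := phi_nonneg a m M s hs0 h₂ ha
  -- expand the inner product
  have expand : mdot (Smap a m M D₁ - Smap a m M D₂) (D₁ - D₂) =
      (fr / r) * (mdot D₁ D₁ - c) + (fs / s) * (mdot D₂ D₂ - c) := by
    have e1 : Smap a m M D₁ = (fr / r) • D₁ := rfl
    have e2 : Smap a m M D₂ = (fs / s) • D₂ := rfl
    rw [e1, e2, mdot_sub_left]
    rw [mdot_comm _ (D₁ - D₂), mdot_sub_left, mdot_comm _ ((fr/r) • D₁),
      mdot_comm _ ((fr/r) • D₁), mdot_smul_left, mdot_smul_left]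
    rw [mdot_comm _ (D₁ - D₂), mdot_sub_left, mdot_comm _ ((fs/s) • D₂),
      mdot_comm _ ((fs/s) • D₂), mdot_smul_left, mdot_smul_left]
    rw [mdot_comm D₂ D₁, ← hc]
    ring
  rw [expand, ← mnorm_sq, ← mnorm_sq, ← hr, ← hsdef]
  -- key coefficient identities
  have key1 : (fr / r) * r ^ 2 = fr * r := by
    rcases eq_or_lt_of_le hr0 with h | h
    · have : fr = 0 := by rw [hfr, ← h]; exact phi_zero a m M hm
      rw [this, ← h]; ring
    · field_simp
  have key2 : (fs / s) * s ^ 2 = fs * s := by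
    rcases eq_or_lt_of_le hs0 with h | h
    · have : fs = 0 := by rw [hfs, ← h]; exact phi_zero a m M hm
      rw [this, ← h]; ring
    · field_simp
  have hcoef : 0 ≤ fr / r + fs / s := by positivity
  have hcs : c ≤ r * s := mdot_le D₁ D₂
  have step1 : (fr / r + fs / s) * c ≤ (fr / r + fs / s) * (r * s) :=
    mul_le_mul_of_nonneg_left hcs hcoef
  have key3 : (fr / r) * (r * s) = fr * s := by
    rcases eq_or_lt_of_le hr0 with h | h
    · have : fr = 0 := by rw [hfr, ← h]; exact phi_zero a m M hm
      rw [this, ← h]; ring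
    · field_simp
  have key4 : (fs / s) * (r * s) = fs * r := by
    rcases eq_or_lt_of_le hs0 with h | h
    · have : fs = 0 := by rw [hfs, ← h]; exact phi_zero a m M hm
      rw [this, ← h]; ring
    · field_simp
  have mono : 0 ≤ (fr - fs) * (r - s) := by
    rcases le_total s r with h | h
    · have := phi_mono a m M ha hs0 h h₁
      rw [← hfr, ← hfs] at this
      exact mul_nonneg (by linarith) (by linarith)
    · have := phi_mono a m M ha hr0 h h₂
      rw [← hfr, ← hfs] at this
      nlinarith
  nlinarith [key1, key2, key3, key4, step1, mono]
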